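/- With Galerkin orthogonality and the approximation factor $\hat\gamma_{s,h}$ as above, the frequency-domain error satisfies the asymptotically constant-free bound $\|\hat\xi\|_{H^1_s(\Omega)}^2 \le (1 + 4\hat\gamma_{s,h}^2)\,\|\hat{\mathscr{R}}\|_{-1,\Omega}^2$. -/

import Mathlib

/- STATEMENT 5: asymptotically constant-free frequency-domain reliability
`‖ξ̂‖²_{H¹_s} ≤ (1 + 4γ̂²_{s,h}) ‖R̂‖²_{-1,Ω}` under Galerkin orthogonality. -/

open scoped ComplexInnerProductSpace

set_option maxHeartbeats 1000000

private lemma stmt5_inner_self {E : Type*} [NormedAddCommGroup E] [InnerProductSpace ℂ E]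
    (x : E) : ⟪x, x⟫ = ((‖x‖ ^ 2 : ℝ) : ℂ) := by
  rw [inner_self_eq_norm_sq_to_K]
  norm_num [Complex.ofReal_pow]

theorem stmt5
    {V Eμ Eγ Eg : Type*} [AddCommGroup V] [Module ℂ V]
    [NormedAddCommGroup Eμ] [InnerProductSpace ℂ Eμ]
    [NormedAddCommGroup Eγ] [InnerProductSpace ℂ Eγ]
    [NormedAddCommGroup Eg] [InnerProductSpace ℂ Eg]
    (Mμ : V →ₗ[ℂ] Eμ) (Mγ : V →ₗ[ℂ] Eγ) (G : V →ₗ[ℂ] Eg)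
    (s : ℂ) (ρ : ℝ) (hρ : ρ = s.re) (hρpos : 0 < ρ)
    (bs : V → V → ℂ)
    (hbs : ∀ v w, bs v w =
      s ^ 2 * ⟪Mμ w, Mμ v⟫ + s * ⟪Mγ w, Mγ v⟫ + ⟪G w, G v⟫)
    (Hsq : V → ℝ)
    (hH : ∀ v, Hsq v = ‖s‖ ^ 2 * ‖Mμ v‖ ^ 2
      + (‖s‖ ^ 2 / ρ) * ‖Mγ v‖ ^ 2 + ‖G v‖ ^ 2)
    (curlySq : V → ℝ)
    (hcurly : ∀ φ, curlySq φ = ‖s‖ ^ 2 * ‖Mμ φ‖ ^ 2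
      + (‖s‖ ^ 2 / ρ) * ‖Mγ φ‖ ^ 2)
    (Vh : Submodule ℂ V)
    (Sstar : V → V)
    (hS : ∀ φ w : V, bs w (Sstar φ) =
      ((‖s‖ ^ 2 : ℝ) : ℂ) * ⟪Mμ φ, Mμ w⟫
        + ((‖s‖ ^ 2 / ρ : ℝ) : ℂ) * ⟪Mγ φ, Mγ w⟫)
    (γhat : ℝ) (hγhat : 0 ≤ γhat)
    (happrox : ∀ φ : V, ∃ vh ∈ Vh,
      ‖G (Sstar φ - vh)‖ ≤ γhat * Real.sqrt (curlySq φ))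
    (R : V → ℂ) (Rnorm : ℝ) (hRnorm : 0 ≤ Rnorm)
    (hbound : ∀ v : V, ‖R v‖ ≤ Rnorm * ‖G v‖)
    (hGal : ∀ vh ∈ Vh, R vh = 0)
    (ξ : V) (hξ : ∀ v : V, bs ξ v = R v) :
    Hsq ξ ≤ (1 + 4 * γhat ^ 2) * Rnorm ^ 2 := by

  have hσ0 : (0:ℝ) ≤ ‖s‖ ^ 2 := by positivity
  have ha : (0:ℝ) ≤ ‖Mμ ξ‖ ^ 2 := sq_nonneg _
  have hb : (0:ℝ) ≤ ‖Mγ ξ‖ ^ 2 := sq_nonneg _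
  have hcurl : curlySq ξ = (‖s‖ ^ 2) * ‖Mμ ξ‖ ^ 2 + ((‖s‖ ^ 2) / ρ) * ‖Mγ ξ‖ ^ 2 := hcurly ξ
  have hcurl0 : 0 ≤ curlySq ξ := by rw [hcurl]; positivity
  obtain ⟨vh, hvh, hGvh⟩ := happrox ξ
  -- bs ξ (Sstar ξ) = curlySq ξ
  have e1 : bs ξ (Sstar ξ) = ((curlySq ξ : ℝ) : ℂ) := by
    rw [hS ξ ξ, hcurl]
    rw [stmt5_inner_self (Mμ ξ), stmt5_inner_self (Mγ ξ)]
    push_cast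
    ring
  have e2 : bs ξ (Sstar ξ - vh) = bs ξ (Sstar ξ) - bs ξ vh := by
    rw [hbs, hbs, hbs, map_sub, map_sub, map_sub,
        inner_sub_left, inner_sub_left, inner_sub_left]
    ring
  have h1 : ((curlySq ξ : ℝ) : ℂ) = R (Sstar ξ - vh) := by
    have h := hξ (Sstar ξ - vh)
    rw [e2, e1, hξ vh, hGal vh hvh] at h
    simpa using h
  -- Step 1: curlySq ξ ≤ γhat² Rnorm²
  have hsq : Real.sqrt (curlySq ξ) ^ 2 = curlySq ξ := Real.sq_sqrt hcurl0
  have h2 : curlySq ξ ≤ Rnorm * (γhat * Real.sqrt (curlySq ξ)) := by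
    calc curlySq ξ = ‖((curlySq ξ : ℝ) : ℂ)‖ := by
          rw [Complex.norm_of_nonneg hcurl0]
      _ = ‖R (Sstar ξ - vh)‖ := by rw [h1]
      _ ≤ Rnorm * ‖G (Sstar ξ - vh)‖ := hbound _
      _ ≤ Rnorm * (γhat * Real.sqrt (curlySq ξ)) :=
          mul_le_mul_of_nonneg_left hGvh hRnorm
  have hcle : curlySq ξ ≤ γhat ^ 2 * Rnorm ^ 2 := by
    rcases eq_or_lt_of_le (Real.sqrt_nonneg (curlySq ξ)) with h0 | h0
    · have : curlySq ξ = 0 := by rw [← hsq, ← h0]; ring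
      rw [this]; positivity
    · have hc : Real.sqrt (curlySq ξ) ≤ γhat * Rnorm := by
        nlinarith [h2, hsq, h0]
      calc curlySq ξ = Real.sqrt (curlySq ξ) * Real.sqrt (curlySq ξ) :=
            (Real.mul_self_sqrt hcurl0).symm
        _ ≤ (γhat * Rnorm) * (γhat * Rnorm) :=
            mul_le_mul hc hc (Real.sqrt_nonneg _) (by positivity)
        _ = γhat ^ 2 * Rnorm ^ 2 := by ring
  -- Step 2: bound on ‖G ξ‖²
  have e3 := hξ ξ
  rw [hbs, stmt5_inner_self (Mμ ξ), stmt5_inner_self (Mγ ξ),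
      stmt5_inner_self (G ξ)] at e3
  have hre : (s ^ 2).re * ‖Mμ ξ‖ ^ 2 + s.re * ‖Mγ ξ‖ ^ 2 + ‖G ξ‖ ^ 2
      = (R ξ).re := by
    have := congrArg Complex.re e3
    simpa [Complex.add_re, Complex.mul_re, ← Complex.ofReal_pow,
      Complex.ofReal_re, Complex.ofReal_im] using this
  have habs2 : ‖s ^ 2‖ = ‖s‖ ^ 2 := norm_pow _ _
  have hres : |(s ^ 2).re| ≤ (‖s‖ ^ 2) := by
    rw [← habs2]; exact Complex.abs_re_le_norm _
  have hRξ : (R ξ).re ≤ Rnorm * ‖G ξ‖ :=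
    le_trans (Complex.re_le_norm _) (hbound ξ)
  have hg1 : ‖G ξ‖ ^ 2 ≤ Rnorm * ‖G ξ‖ + (‖s‖ ^ 2) * ‖Mμ ξ‖ ^ 2 := by
    have h3 : -(‖s‖ ^ 2) ≤ (s ^ 2).re := (abs_le.mp hres).1
    have h4 : -(‖s‖ ^ 2) * ‖Mμ ξ‖ ^ 2 ≤ (s ^ 2).re * ‖Mμ ξ‖ ^ 2 :=
      mul_le_mul_of_nonneg_right h3 ha
    have h5 : 0 ≤ s.re * ‖Mγ ξ‖ ^ 2 := by
      rw [← hρ]; exact mul_nonneg hρpos.le hb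
    linarith
  have hσa : (‖s‖ ^ 2) * ‖Mμ ξ‖ ^ 2 ≤ curlySq ξ := by
    rw [hcurl]
    have : 0 ≤ ((‖s‖ ^ 2) / ρ) * ‖Mγ ξ‖ ^ 2 := by positivity
    linarith
  -- Young: Rnorm * ‖G ξ‖ ≤ Rnorm²/2 + ‖G ξ‖²/2
  have hyoung : Rnorm * ‖G ξ‖ ≤ Rnorm ^ 2 / 2 + ‖G ξ‖ ^ 2 / 2 := by
    nlinarith [sq_nonneg (Rnorm - ‖G ξ‖)]
  have hgfin : ‖G ξ‖ ^ 2 ≤ Rnorm ^ 2 + 2 * (γhat ^ 2 * Rnorm ^ 2) := by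
    nlinarith [hg1, hσa, hcle, hyoung]
  have hHeq : Hsq ξ = curlySq ξ + ‖G ξ‖ ^ 2 := by
    rw [hH, hcurl]
  rw [hHeq]
  nlinarith [hcle, hgfin, mul_nonneg (sq_nonneg γhat) (sq_nonneg Rnorm)]
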